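/- arXiv:2211.03292 — 6 statements merged into one kernel-verified Lean document; each statement's English description precedes it below -/
import Mathlib

section
/- For every m in [n/2, 2n] (with appropriate divisibility), there exists a set S of at most 2 binary strings of length m such that for every binary string x of length n, some s in S has |LCS(s, x)| >= (n+m)/3. -/
/-- Length of a longest common subsequence of two binary strings. -/
noncomputable def lcsLen (x y : List Bool) : ℕ :=
  sSup {n | ∃ s : List Bool, s.length = n ∧ s.Sublist x ∧ s.Sublist y}

def strA (c e : ℕ) : List Bool :=
  List.replicate c false ++ (List.replicate e [false, true]).flatten

def strB (c e : ℕ) : List Bool :=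
  List.replicate c true ++ (List.replicate e [true, false]).flatten

lemma strA_succ (c e : ℕ) : strA c (e+1) = strA c e ++ [false, true] := by
  simp [strA, List.replicate_succ' (n := e), List.append_assoc]

lemma strB_succ (c e : ℕ) : strB c (e+1) = strB c e ++ [true, false] := by
  simp [strB, List.replicate_succ' (n := e), List.append_assoc]

lemma strA_length (c e : ℕ) : (strA c e).length = c + 2 * e := by
  induction e with
  | zero => simp [strA]
  | succ e ih => rw [strA_succ]; simp at ih ⊢; omega

lemma strB_length (c e : ℕ) : (strB c e).length = c + 2 * e := by
  induction e with
  | zero => simp [strB]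
  | succ e ih => rw [strB_succ]; simp at ih ⊢; omega

lemma count_tf (x : List Bool) : x.count true + x.count false = x.length := by
  induction x with
  | nil => simp
  | cons a l ih => cases a <;> simp [List.count_cons] <;> omega

lemma main_lemma (e : ℕ) : ∀ c : ℕ, ∀ x : List Bool, x.length = 2 * c + e →
    (∃ y : List Bool, y.length = c + e ∧ y.Sublist x ∧ y.Sublist (strA c e)) ∨
    (∃ y : List Bool, y.length = c + e ∧ y.Sublist x ∧ y.Sublist (strB c e)) := by
  induction e with
  | zero =>
    intro c x hx
    have hc := count_tf x
    by_cases h : c ≤ x.count false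
    · left
      exact ⟨List.replicate c false, by simp,
        List.replicate_sublist_iff.mpr h, by
          simp only [strA]
          simpa using (List.replicate_sublist_replicate false).2 le_rfl⟩
    · right
      refine ⟨List.replicate c true, by simp,
        List.replicate_sublist_iff.mpr (by omega), by
          simp only [strB]
          simpa using (List.replicate_sublist_replicate true).2 le_rfl⟩
  | succ e ih =>
    intro c x hx
    rcases x.eq_nil_or_concat' with rfl | ⟨l, a, rfl⟩
    · simp at hx
    · have hl : l.length = 2 * c + e := by simp at hx; omega
      have ha : [a].Sublist [false, true] := by cases a <;> decide
      have hb : [a].Sublist [true, false] := by cases a <;> decide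
      rcases ih c l hl with ⟨y, hy1, hy2, hy3⟩ | ⟨y, hy1, hy2, hy3⟩
      · exact Or.inl ⟨y ++ [a], (by simp [hy1]; omega), hy2.append (List.Sublist.refl _),
          by rw [strA_succ]; exact hy3.append ha⟩
      · exact Or.inr ⟨y ++ [a], (by simp [hy1]; omega), hy2.append (List.Sublist.refl _),
          by rw [strB_succ]; exact hy3.append hb⟩

lemma lcs_lower {s x y : List Bool} (h1 : y.Sublist s) (h2 : y.Sublist x) :
    y.length ≤ lcsLen s x :=
  le_csSup ⟨s.length, by rintro n ⟨t, rfl, hts, htx⟩; exact hts.length_le⟩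
    ⟨y, rfl, h1, h2⟩

theorem stmt0 (n m : ℕ) (h1 : n ≤ 2 * m) (h2 : m ≤ 2 * n) (h3 : 3 ∣ n + m) :
    ∃ S : Finset (List Bool), S.card ≤ 2 ∧ (∀ s ∈ S, s.length = m) ∧
      ∀ x : List Bool, x.length = n → ∃ s ∈ S, (n + m) / 3 ≤ lcsLen s x := by
  obtain ⟨k, hk⟩ := h3
  have hkn : k ≤ n := by omega
  have hkm : k ≤ m := by omega
  set c := n - k with hc
  set e := m - k with he
  have hce : c + e = k := by omega
  refine ⟨{strA c e, strB c e}, ?_, ?_, ?_⟩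
  · exact (Finset.card_insert_le _ _).trans (by simp)
  · intro s hs
    rcases Finset.mem_insert.mp hs with rfl | hs
    · rw [strA_length]; omega
    · rw [Finset.mem_singleton.mp hs, strB_length]; omega
  · intro x hx
    have hdiv : (n + m) / 3 = k := by omega
    rcases main_lemma e c x (by omega) with ⟨y, hy1, hy2, hy3⟩ | ⟨y, hy1, hy2, hy3⟩
    · exact ⟨strA c e, by simp, by rw [hdiv, ← hce, ← hy1]; exact lcs_lower hy3 hy2⟩
    · exact ⟨strB c e, by simp, by rw [hdiv, ← hce, ← hy1]; exact lcs_lower hy3 hy2⟩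
end

section
/- For m = 2a + b and n = a + 2b with a, b nonnegative integers, the set S = {(01)^a 0^b, (01)^a 1^b} of m-bit strings is an ((n+m)/3)-LCS cover for strings of length n; i.e., for every x in {0,1}^n, max_{s in S} |LCS(s,x)| >= a + b. -/
/-- Any common sublist gives a lower bound on `lcsLen`. -/
lemma lcs_ge (x y s : List Bool) (h1 : s.Sublist x) (h2 : s.Sublist y) :
    s.length ≤ lcsLen x y := by
  apply le_csSup
  · exact ⟨x.length, fun n ⟨t, ht, htx, _⟩ => ht ▸ htx.length_le⟩
  · exact ⟨s, rfl, h1, h2⟩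

/-- Every binary string of length ≤ a is a sublist of (01)^a. -/
lemma sublist_alt (w : List Bool) (a : ℕ) (h : w.length ≤ a) :
    w.Sublist ((List.replicate a [false, true]).flatten) := by
  induction a generalizing w with
  | zero =>
    have : w = [] := List.length_eq_zero_iff.mp (Nat.le_zero.mp h)
    simp [this]
  | succ n ih =>
    cases w with
    | nil => exact List.nil_sublist _
    | cons c w' =>
      rw [List.replicate_succ, List.flatten_cons]
      have hw' := ih w' (by simpa using h)
      show (c :: w').Sublist (false :: true :: _)
      cases c
      · exact (hw'.cons true).cons₂ false
      · exact ((hw'.cons₂ true).cons false)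

lemma count_add_count (l : List Bool) : l.count false + l.count true = l.length := by
  induction l with
  | nil => simp
  | cons c t ih => cases c <;> simp [List.count_cons] <;> omega

theorem stmt1 (a b : ℕ) (x : List Bool) (hx : x.length = a + 2 * b) :
    a + b ≤
      max (lcsLen ((List.replicate a [false, true]).flatten ++ List.replicate b false) x)
          (lcsLen ((List.replicate a [false, true]).flatten ++ List.replicate b true) x) := by
  have htake : (x.take a).length = a := by
    rw [List.length_take, hx]; omega
  have hdrop : (x.drop a).length = 2 * b := by
    rw [List.length_drop, hx]; omega
  have hcnt := count_add_count (x.drop a)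
  rw [hdrop] at hcnt
  have hcases : b ≤ (x.drop a).count false ∨ b ≤ (x.drop a).count true := by omega
  rcases hcases with hc | hc
  · apply le_trans _ (le_max_left _ _)
    have h1 : (x.take a ++ List.replicate b false).Sublist
        ((List.replicate a [false, true]).flatten ++ List.replicate b false) :=
      (sublist_alt _ a htake.le).append (List.Sublist.refl _)
    have h2 : (x.take a ++ List.replicate b false).Sublist x := by
      conv_rhs => rw [← List.take_append_drop a x]
      exact (List.Sublist.refl _).append (List.replicate_sublist_iff.mpr hc)
    have := lcs_ge _ _ _ h1 h2
    simpa [htake] using this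
  · apply le_trans _ (le_max_right _ _)
    have h1 : (x.take a ++ List.replicate b true).Sublist
        ((List.replicate a [false, true]).flatten ++ List.replicate b true) :=
      (sublist_alt _ a htake.le).append (List.Sublist.refl _)
    have h2 : (x.take a ++ List.replicate b true).Sublist x := by
      conv_rhs => rw [← List.take_append_drop a x]
      exact (List.Sublist.refl _).append (List.replicate_sublist_iff.mpr hc)
    have := lcs_ge _ _ _ h1 h2
    simpa [htake] using this
end

section
/- If a binary string x of length n contains t disjoint occurrences of the pattern 01 (as subsequences in disjoint position pairs), then for every m >= n - t, |LCS(x, (01)^m)| = n, i.e., x is a subsequence of (01)^m. -/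
private def pat (t : ℕ) : List Bool := (List.replicate t [false, true]).flatten

private lemma pat_succ (t : ℕ) : pat (t + 1) = false :: true :: pat t := by
  simp [pat, List.replicate_succ]

private lemma pat_length (t : ℕ) : (pat t).length = 2 * t := by
  induction t with
  | zero => simp [pat]
  | succ n ih => rw [pat_succ]; simp [ih]; omega

private lemma pat_mono {k m : ℕ} (h : k ≤ m) : (pat k).Sublist (pat m) := by
  have : pat m = pat k ++ pat (m - k) := by
    rw [pat, pat, pat, ← List.flatten_append, ← List.replicate_add,
      Nat.add_sub_cancel' h]
  rw [this]
  exact List.sublist_append_left _ _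

private lemma key (x : List Bool) :
    (∀ t, (pat t).Sublist x → x.Sublist (pat (x.length - t))) ∧
    (∀ t, (true :: pat t).Sublist x → x.Sublist (true :: pat (x.length - 1 - t))) := by
  induction x with
  | nil =>
    constructor
    · intro t h; simp
    · intro t h; exact absurd (h.length_le) (by simp)
  | cons b x ih =>
    obtain ⟨ihA, ihB⟩ := ih
    constructor
    · intro t h
      match t with
      | 0 =>
        have hx := ihA 0 (by simp [pat])
        simp only [pat] at hx ⊢
        simp only [List.length_cons, Nat.sub_zero] at hx ⊢
        rw [show x.length + 1 = x.length + 1 from rfl, ← pat, pat_succ]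
        cases b
        · exact (hx.cons true).cons₂ false
        · exact (hx.cons₂ true).cons false
      | t' + 1 =>
        rw [pat_succ] at h
        have hlen0 : (pat (t' + 1)).length ≤ (b :: x).length := by
          rw [← pat_succ] at h; exact h.length_le
        rw [pat_length] at hlen0
        simp only [List.length_cons] at hlen0 ⊢
        cases h with
        | cons _ h' =>
          rw [← pat_succ] at h'
          have hx := ihA (t' + 1) h'
          have hlen : 2 * (t' + 1) ≤ x.length := by
            have := h'.length_le; rwa [pat_length] at this
          have e : x.length + 1 - (t' + 1) = (x.length - (t' + 1)) + 1 := by omega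
          rw [e, pat_succ]
          cases b
          · exact ((hx.cons true).cons₂ false)
          · exact ((hx.cons₂ true).cons false)
        | cons_cons _ h' =>
          have hx := ihB t' h'
          have hlen : 1 + 2 * t' ≤ x.length := by
            have := h'.length_le; simp [pat_length] at this; omega
          have e : x.length + 1 - (t' + 1) = (x.length - 1 - t') + 1 := by omega
          rw [e, pat_succ]
          exact hx.cons₂ false
    · intro t h
      cases h with
      | cons _ h' =>
        have hx := ihB t h'
        have hlen : 1 + 2 * t ≤ x.length := by
          have := h'.length_le; simp [pat_length] at this; omega
        simp only [List.length_cons]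
        have e : x.length + 1 - 1 - t = (x.length - 1 - t) + 1 := by omega
        rw [e, pat_succ]
        cases b
        · exact ((hx.cons₂ false).cons true)
        · exact ((hx.cons false).cons₂ true)
      | cons_cons _ h' =>
        have hx := ihA t h'
        simp only [List.length_cons]
        have e : x.length + 1 - 1 - t = x.length - t := by omega
        rw [e]
        exact hx.cons₂ true

/-- If `x` contains `t` disjoint occurrences of the pattern `01` (equivalently,
`(01)^t` is a subsequence of `x`), then for every `m ≥ n - t`, `x` is a
subsequence of `(01)^m` and hence `|LCS(x, (01)^m)| = n` where `n = |x|`. -/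
theorem stmt3 (t : ℕ) (x : List Bool)
    (h : ((List.replicate t [false, true]).flatten).Sublist x) :
    ∀ m : ℕ, x.length - t ≤ m →
      x.Sublist ((List.replicate m [false, true]).flatten) ∧
      lcsLen x ((List.replicate m [false, true]).flatten) = x.length := by
  intro m hm
  have hsub : x.Sublist ((List.replicate m [false, true]).flatten) := by
    have h1 := (key x).1 t h
    exact h1.trans (pat_mono hm)
  refine ⟨hsub, ?_⟩
  unfold lcsLen
  set y := (List.replicate m [false, true]).flatten
  have hmem : x.length ∈ {n | ∃ s : List Bool, s.length = n ∧ s.Sublist x ∧ s.Sublist y} :=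
    ⟨x, rfl, List.Sublist.refl x, hsub⟩
  have hbdd : ∀ a ∈ {n | ∃ s : List Bool, s.length = n ∧ s.Sublist x ∧ s.Sublist y},
      a ≤ x.length := by
    rintro a ⟨s, rfl, hs, _⟩
    exact hs.length_le
  exact le_antisymm (csSup_le ⟨x.length, hmem⟩ hbdd) (le_csSup ⟨x.length, hbdd⟩ hmem)
end

section
/- Fix k >= 1 and a pattern y in {0,1}^k. For the string x^(t) = (0^t 1^t)^{l/(2t)} of length l (where 2t divides l), the k-deck count K_k(x^(t))_y, viewed as a function of t, is a polynomial in t of degree at most k-1 with coefficients that are polynomial functions of l; i.e., K_k(x^(t))_y = sum_{i=0}^{k-1} t^i * f_{y,i}(l) for some polynomials f_{y,i}. -/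
/-- The `y`-entry of the `k`-deck of a string `x`. -/
def deck (k : ℕ) (x : List Bool) (y : Fin k → Bool) : ℕ :=
  (Finset.univ.filter fun f : Fin k → Fin x.length =>
      (∀ i j : Fin k, i < j → f i < f j) ∧ ∀ j, x.get (f j) = y j).card

/-- The periodic string `x^(t) = (0^t 1^t)^{l/(2t)}` of length `l` (when `2t ∣ l`). -/
def xt (l t : ℕ) : List Bool :=
  (List.replicate (l / (2 * t)) (List.replicate t false ++ List.replicate t true)).flatten

def dk : List Bool → List Bool → ℕ
  | _, [] => 1
  | [], _ :: _ => 0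
  | a :: x, b :: w => dk x (b :: w) + if a = b then dk x w else 0

@[simp] lemma dk_nil_right (x : List Bool) : dk x [] = 1 := by cases x <;> rfl

@[simp] lemma dk_cons_cons (a b : Bool) (x w : List Bool) :
    dk (a :: x) (b :: w) = dk x (b :: w) + if a = b then dk x w else 0 := rfl

lemma dk_nil_left (w : List Bool) : dk [] w = if w = [] then 1 else 0 := by
  cases w <;> simp [dk]

@[simp] lemma deck_zero (x : List Bool) (y : Fin 0 → Bool) : deck 0 x y = 1 := by
  simp only [deck]
  rw [Finset.filter_true_of_mem (fun f _ => ⟨fun i => i.elim0, fun j => j.elim0⟩)]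
  simp

lemma deck_nil (k : ℕ) (hk : 0 < k) (y : Fin k → Bool) : deck k [] y = 0 := by
  simp only [deck]
  rw [Finset.card_eq_zero, Finset.filter_eq_empty_iff]
  intro f _
  have : Fin ([] : List Bool).length := f ⟨0, hk⟩
  simp at this
  exact this.elim0

lemma deck_cons (k : ℕ) (a : Bool) (x : List Bool) (y : Fin (k+1) → Bool) :
    deck (k+1) (a :: x) y =
      (if a = y 0 then deck k x (fun j => y j.succ) else 0) + deck (k+1) x y := by
  classical
  rw [show deck (k+1) (a :: x) y =
      (Finset.univ.filter fun f : Fin (k+1) → Fin (x.length + 1) =>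
        (∀ i j : Fin (k+1), i < j → f i < f j) ∧ ∀ j, (a :: x).get (f j) = y j).card from rfl]
  rw [← Finset.card_filter_add_card_filter_not
      (fun f : Fin (k+1) → Fin (x.length + 1) => f 0 = 0)]
  congr 1
  · -- f 0 = 0 case
    by_cases hy : a = y 0
    · rw [if_pos hy, deck]
      refine Finset.card_bij'
        (fun f hf => fun j : Fin k => (⟨(f j.succ : ℕ) - 1, by
          simp only [Finset.filter_filter, Finset.mem_filter, Finset.mem_univ, true_and] at hf
          obtain ⟨⟨hmono, hget⟩, hf0⟩ := hf
          have h1 : f 0 < f j.succ := hmono 0 j.succ (Fin.succ_pos j)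
          have h0 : (f 0 : ℕ) = 0 := congrArg Fin.val hf0
          have h2 : (f j.succ : ℕ) < x.length + 1 := (f j.succ).isLt
          rw [Fin.lt_def, h0] at h1
          omega⟩ : Fin x.length))
        (fun g hg => Fin.cons 0 (fun j => (g j).succ)) ?_ ?_ ?_ ?_
      · intro f hf
        simp only [Finset.filter_filter, Finset.mem_filter, Finset.mem_univ, true_and] at hf ⊢
        obtain ⟨⟨hmono, hget⟩, hf0⟩ := hf
        have h0 : (f 0 : ℕ) = 0 := congrArg Fin.val hf0
        have hpos : ∀ j : Fin k, 0 < (f j.succ : ℕ) := by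
          intro j
          have h1 := hmono 0 j.succ (Fin.succ_pos j)
          rw [Fin.lt_def, h0] at h1
          exact h1
        constructor
        · intro i j hij
          have h1 := hmono i.succ j.succ (Fin.succ_lt_succ_iff.mpr hij)
          rw [Fin.lt_def] at h1 ⊢
          have := hpos i
          simp only
          omega
        · intro j
          have hh := hget j.succ
          have hj1 := hpos j
          simp only [List.get_eq_getElem] at hh ⊢
          obtain ⟨m, hm⟩ : ∃ m, (f j.succ : ℕ) = m + 1 := ⟨(f j.succ : ℕ) - 1, by omega⟩
          simp only [hm, List.getElem_cons_succ] at hh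
          simpa [hm] using hh
      · intro g hg
        simp only [Finset.filter_filter, Finset.mem_filter, Finset.mem_univ, true_and] at hg ⊢
        obtain ⟨hmono, hget⟩ := hg
        refine ⟨⟨?_, ?_⟩, ?_⟩
        · intro i j hij
          induction j using Fin.cases with
          | zero => exact absurd hij (Fin.not_lt_zero i)
          | succ j' =>
            induction i using Fin.cases with
            | zero =>
              simp only [Fin.cons_zero, Fin.cons_succ]
              exact Fin.succ_pos _
            | succ i' =>
              simp only [Fin.cons_succ]
              exact Fin.succ_lt_succ_iff.mpr (hmono i' j' (Fin.succ_lt_succ_iff.mp hij))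
        · intro j
          induction j using Fin.cases with
          | zero => simpa [Fin.cons_zero, List.get_eq_getElem] using hy
          | succ j' =>
            simp only [Fin.cons_succ, List.get_eq_getElem, Fin.val_succ,
              List.getElem_cons_succ]
            simpa [List.get_eq_getElem] using hget j'
        · simp
      · intro f hf
        simp only [Finset.filter_filter, Finset.mem_filter, Finset.mem_univ, true_and] at hf
        obtain ⟨⟨hmono, hget⟩, hf0⟩ := hf
        have h0 : (f 0 : ℕ) = 0 := congrArg Fin.val hf0
        funext j
        induction j using Fin.cases with
        | zero => simp [Fin.cons_zero, hf0.symm]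
        | succ j' =>
          simp only [Fin.cons_succ]
          have hj1 : 0 < (f j'.succ : ℕ) := by
            have h1 := hmono 0 j'.succ (Fin.succ_pos j')
            rw [Fin.lt_def, h0] at h1
            exact h1
          apply Fin.ext
          simp only [Fin.val_succ]
          omega
      · intro g hg
        funext j
        apply Fin.ext
        simp [Fin.val_succ]
    · rw [if_neg hy]
      rw [Finset.card_eq_zero, Finset.filter_eq_empty_iff]
      intro f hf
      simp only [Finset.mem_filter, Finset.mem_univ, true_and] at hf
      intro hf0
      apply hy
      have hh := hf.2 0
      rw [hf0] at hh
      simpa [List.get_eq_getElem] using hh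
  · -- f 0 ≠ 0 case
    rw [deck]
    have key : ∀ f : Fin (k+1) → Fin (x.length + 1),
        (∀ i j : Fin (k+1), i < j → f i < f j) → ¬ f 0 = 0 → ∀ j, 0 < (f j : ℕ) := by
      intro f hmono hf0 j
      rcases eq_or_ne j 0 with rfl | hj
      · exact Nat.pos_of_ne_zero (fun h => hf0 (Fin.ext h))
      · have h1 : f 0 < f j := hmono 0 j (Fin.pos_iff_ne_zero.mpr hj)
        rw [Fin.lt_def] at h1
        omega
    refine Finset.card_bij'
      (fun f hf => fun j : Fin (k+1) => (⟨(f j : ℕ) - 1, by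
        simp only [Finset.filter_filter, Finset.mem_filter, Finset.mem_univ, true_and] at hf
        have h1 := key f hf.1.1 hf.2 j
        have h2 := (f j).isLt
        omega⟩ : Fin x.length))
      (fun g hg => fun j => (g j).succ) ?_ ?_ ?_ ?_
    · intro f hf
      simp only [Finset.filter_filter, Finset.mem_filter, Finset.mem_univ, true_and] at hf ⊢
      obtain ⟨⟨hmono, hget⟩, hf0⟩ := hf
      have hpos := key f hmono hf0
      constructor
      · intro i j hij
        have h1 := hmono i j hij
        rw [Fin.lt_def] at h1 ⊢
        have := hpos i
        simp only
        omega
      · intro j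
        have hh := hget j
        have hj1 := hpos j
        simp only [List.get_eq_getElem] at hh ⊢
        obtain ⟨m, hm⟩ : ∃ m, (f j : ℕ) = m + 1 := ⟨(f j : ℕ) - 1, by omega⟩
        simp only [hm, List.getElem_cons_succ] at hh
        simpa [hm] using hh
    · intro g hg
      simp only [Finset.filter_filter, Finset.mem_filter, Finset.mem_univ, true_and] at hg ⊢
      obtain ⟨hmono, hget⟩ := hg
      refine ⟨⟨?_, ?_⟩, ?_⟩
      · intro i j hij
        exact Fin.succ_lt_succ_iff.mpr (hmono i j hij)
      · intro j
        simp only [List.get_eq_getElem, Fin.val_succ, List.getElem_cons_succ]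
        simpa [List.get_eq_getElem] using hget j
      · exact Fin.succ_ne_zero _
    · intro f hf
      simp only [Finset.filter_filter, Finset.mem_filter, Finset.mem_univ, true_and] at hf
      obtain ⟨⟨hmono, hget⟩, hf0⟩ := hf
      have hpos := key f hmono hf0
      funext j
      apply Fin.ext
      simp only [Fin.val_succ]
      have := hpos j
      omega
    · intro g hg
      funext j
      apply Fin.ext
      simp [Fin.val_succ]

lemma deck_eq_dk (x : List Bool) : ∀ (k : ℕ) (y : Fin k → Bool),
    deck k x y = dk x (List.ofFn y) := by
  induction x with
  | nil =>
    intro k y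
    cases k with
    | zero => simp
    | succ k =>
      rw [deck_nil _ (Nat.succ_pos k), List.ofFn_succ]
      simp [dk]
  | cons a x ih =>
    intro k y
    cases k with
    | zero => simp
    | succ k =>
      rw [deck_cons, ih, ih, List.ofFn_succ, dk_cons_cons, ← List.ofFn_succ, add_comm]

lemma dk_append (u : List Bool) : ∀ (v w : List Bool),
    dk (u ++ v) w = ∑ j ∈ Finset.range (w.length + 1), dk u (w.take j) * dk v (w.drop j) := by
  induction u with
  | nil =>
    intro v w
    cases w with
    | nil => simp
    | cons b w' =>
      rw [List.nil_append, Finset.sum_eq_single 0]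
      · simp
      · intro j hj hj0
        rcases Nat.exists_eq_succ_of_ne_zero hj0 with ⟨m, rfl⟩
        simp [dk_nil_left, dk]
      · intro h
        simp at h
  | cons a u ih =>
    intro v w
    cases w with
    | nil => simp
    | cons b w' =>
      have L : dk (a :: u ++ v) (b :: w') =
          dk (u ++ v) (b :: w') + if a = b then dk (u ++ v) w' else 0 := rfl
      have e1 := Finset.sum_range_succ'
        (fun j => dk u (List.take j (b :: w')) * dk v (List.drop j (b :: w'))) ((b :: w').length)
      have e2 := Finset.sum_range_succ'
        (fun j => dk (a :: u) (List.take j (b :: w')) * dk v (List.drop j (b :: w'))) ((b :: w').length)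
      rw [L, ih, ih, e1, e2]
      simp only [List.take_succ_cons, List.drop_succ_cons, List.take_zero, List.drop_zero,
        dk_nil_right, dk_cons_cons, one_mul, List.length_cons]
      by_cases hab : a = b
      · simp only [if_pos hab, add_mul, Finset.sum_add_distrib]
        ring
      · simp only [if_neg hab, add_zero]

lemma dk_replicate (c : Bool) : ∀ (t : ℕ) (w : List Bool),
    dk (List.replicate t c) w =
      if w = List.replicate w.length c then t.choose w.length else 0 := by
  intro t
  induction t with
  | zero =>
    intro w
    cases w with
    | nil => simp
    | cons b w' => simp [dk_nil_left]
  | succ t ih =>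
    intro w
    cases w with
    | nil => simp
    | cons b w' =>
      rw [List.replicate_succ, dk_cons_cons, ih, ih]
      simp only [List.length_cons, List.replicate_succ]
      by_cases hb : b = c
      · subst hb
        by_cases hw : w' = List.replicate w'.length b
        · simp only [if_pos rfl, if_pos (congrArg (b :: ·) hw), if_pos hw]
          rw [Nat.choose_succ_succ']
          simp [Nat.add_comm]
        · have : ¬ (b :: w' = b :: List.replicate w'.length b) := by
            simp [hw]
          simp [hw, this]
      · have h1 : ¬ (b :: w' = c :: List.replicate w'.length c) := by
          simp [hb]
        simp only [if_neg h1]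
        by_cases hw : w' = List.replicate w'.length c
        · simp [Ne.symm hb]
        · simp [hw, hb]

open Polynomial in
noncomputable def cp (m : ℕ) : Polynomial ℚ := C ((m.factorial : ℚ)⁻¹) * descPochhammer ℚ m

lemma cp_eval (m t : ℕ) : (cp m).eval (t : ℚ) = t.choose m := by
  have hf : (m.factorial : ℚ) ≠ 0 := by exact_mod_cast m.factorial_ne_zero
  rw [cp, Polynomial.eval_mul, Polynomial.eval_C,
    descPochhammer_eval_eq_descFactorial ℚ t m,
    Nat.descFactorial_eq_factorial_mul_choose]
  push_cast
  field_simp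

lemma cp_coeff_zero (m : ℕ) (hm : 0 < m) : (cp m).coeff 0 = 0 := by
  rw [Polynomial.coeff_zero_eq_eval_zero, cp, Polynomial.eval_mul, Polynomial.eval_C,
    descPochhammer_eval_zero]
  simp [Nat.pos_iff_ne_zero.mp hm]

lemma cp_natDegree (m : ℕ) : (cp m).natDegree ≤ m := by
  refine le_trans (Polynomial.natDegree_C_mul_le _ _) ?_
  rw [descPochhammer_natDegree]

abbrev per (t : ℕ) : List Bool := List.replicate t false ++ List.replicate t true

open Polynomial in
noncomputable def epoly (z : List Bool) : Polynomial ℚ :=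
  ∑ j ∈ Finset.range (z.length + 1),
    if z.take j = List.replicate j false ∧ z.drop j = List.replicate (z.length - j) true
    then cp j * cp (z.length - j) else 0

lemma epoly_eval (z : List Bool) (t : ℕ) : (epoly z).eval (t : ℚ) = dk (per t) z := by
  rw [per, dk_append]
  rw [epoly, Polynomial.eval_finset_sum]
  push_cast
  refine Finset.sum_congr rfl ?_
  intro j hj
  rw [Finset.mem_range] at hj
  have hjle : j ≤ z.length := by omega
  rw [dk_replicate, dk_replicate, List.length_take, List.length_drop,
    Nat.min_eq_left hjle]
  by_cases h1 : z.take j = List.replicate j false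
  · by_cases h2 : z.drop j = List.replicate (z.length - j) true
    · rw [if_pos ⟨h1, h2⟩, if_pos h1, if_pos h2, Polynomial.eval_mul, cp_eval, cp_eval]
    · rw [if_neg (fun h => h2 h.2), if_neg h2]
      simp
  · rw [if_neg (fun h => h1 h.1), if_neg h1]
    simp

lemma epoly_coeff (z : List Bool) (hz : z ≠ []) :
    ∀ B, (epoly z).coeff B ≠ 0 → 1 ≤ B ∧ B ≤ z.length := by
  intro B hB
  have hzl : 1 ≤ z.length := List.length_pos_iff.mpr hz
  rw [epoly, Polynomial.finset_sum_coeff] at hB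
  obtain ⟨j, hjmem, hj⟩ := Finset.exists_ne_zero_of_sum_ne_zero hB
  rw [Finset.mem_range] at hjmem
  have hjle : j ≤ z.length := by omega
  by_cases hcond : z.take j = List.replicate j false ∧ z.drop j = List.replicate (z.length - j) true
  · rw [if_pos hcond] at hj
    constructor
    · by_contra hB0
      have hB0 : B = 0 := by omega
      subst hB0
      rw [Polynomial.mul_coeff_zero] at hj
      rcases Nat.eq_zero_or_pos j with rfl | hjpos
      · have : 0 < z.length - 0 := by omega
        rw [cp_coeff_zero _ this] at hj
        simp at hj
      · rw [cp_coeff_zero _ hjpos] at hj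
        simp at hj
    · by_contra hBk
      push_neg at hBk
      have hdeg : (cp j * cp (z.length - j)).natDegree ≤ z.length := by
        refine le_trans (Polynomial.natDegree_mul_le) ?_
        have := cp_natDegree j
        have := cp_natDegree (z.length - j)
        omega
      exact hj (Polynomial.coeff_eq_zero_of_natDegree_lt (by omega))
  · rw [if_neg hcond] at hj
    simp at hj

open Polynomial in
noncomputable def faul (A : ℕ) : Polynomial ℚ :=
  ∑ i ∈ Finset.range (A + 1),
    C (_root_.bernoulli i * ((A + 1).choose i) / (A + 1)) * X ^ (A + 1 - i)

lemma faul_eval (A M : ℕ) :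
    (faul A).eval (M : ℚ) = ∑ m ∈ Finset.range M, (m : ℚ) ^ A := by
  rw [sum_range_pow, faul, Polynomial.eval_finset_sum]
  refine Finset.sum_congr rfl ?_
  intro i _
  rw [Polynomial.eval_mul, Polynomial.eval_C, Polynomial.eval_pow, Polynomial.eval_X]
  ring

lemma faul_coeff_zero (A : ℕ) : (faul A).coeff 0 = 0 := by
  rw [faul, Polynomial.finset_sum_coeff]
  refine Finset.sum_eq_zero ?_
  intro i hi
  rw [Finset.mem_range] at hi
  rw [Polynomial.coeff_C_mul, Polynomial.coeff_X_pow, if_neg (by omega)]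
  ring

lemma faul_natDegree (A : ℕ) : (faul A).natDegree ≤ A + 1 := by
  refine Polynomial.natDegree_sum_le_of_forall_le _ _ ?_
  intro i _
  refine le_trans (Polynomial.natDegree_C_mul_le _ _) ?_
  rw [Polynomial.natDegree_X_pow]
  omega

noncomputable def evh (t M : ℕ) : Polynomial (Polynomial ℚ) →+* ℚ :=
  (Polynomial.evalRingHom (t : ℚ)).comp (Polynomial.evalRingHom (Polynomial.C (M : ℚ)))

open Polynomial in
noncomputable def sig (q : Polynomial (Polynomial ℚ)) : Polynomial (Polynomial ℚ) :=
  ∑ A ∈ Finset.range (q.natDegree + 1),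
    C (q.coeff A) * (faul A).map (C : ℚ →+* Polynomial ℚ)

lemma evh_C_eval (e : Polynomial ℚ) (t M : ℕ) :
    evh t M (Polynomial.C e) = e.eval (t : ℚ) := by
  simp [evh]

lemma evh_X (t M : ℕ) : evh t M Polynomial.X = (M : ℚ) := by
  simp [evh]

lemma evh_map_C (s : Polynomial ℚ) (t M : ℕ) :
    evh t M (s.map (Polynomial.C : ℚ →+* Polynomial ℚ)) = s.eval (M : ℚ) := by
  simp only [evh, RingHom.comp_apply, Polynomial.coe_evalRingHom]
  rw [Polynomial.eval_map, Polynomial.eval₂_at_apply, Polynomial.eval_C]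

lemma evh_eq_sum (q : Polynomial (Polynomial ℚ)) (t M : ℕ) :
    evh t M q = ∑ A ∈ Finset.range (q.natDegree + 1),
      (q.coeff A).eval (t : ℚ) * (M : ℚ) ^ A := by
  simp only [evh, RingHom.comp_apply, Polynomial.coe_evalRingHom]
  rw [Polynomial.eval_eq_sum_range (p := q) (Polynomial.C (M : ℚ)), Polynomial.eval_finset_sum]
  refine Finset.sum_congr rfl ?_
  intro A _
  rw [Polynomial.eval_mul, Polynomial.eval_pow, Polynomial.eval_C]

lemma sig_eval (q : Polynomial (Polynomial ℚ)) (t M : ℕ) :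
    evh t M (sig q) = ∑ m ∈ Finset.range M, evh t m q := by
  rw [sig, map_sum]
  have : ∀ A ∈ Finset.range (q.natDegree + 1),
      evh t M (Polynomial.C (q.coeff A) * (faul A).map Polynomial.C)
        = (q.coeff A).eval (t : ℚ) * ∑ m ∈ Finset.range M, (m : ℚ) ^ A := by
    intro A _
    rw [map_mul, evh_C_eval, evh_map_C, faul_eval]
  rw [Finset.sum_congr rfl this]
  simp_rw [Finset.mul_sum]
  rw [Finset.sum_comm]
  refine Finset.sum_congr rfl ?_
  intro m _
  rw [evh_eq_sum]

def good (k : ℕ) (p : Polynomial (Polynomial ℚ)) : Prop :=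
  ∀ A B : ℕ, (p.coeff A).coeff B ≠ 0 → 1 ≤ A ∧ A ≤ B ∧ B ≤ k

lemma good_sum {ι : Type*} {k : ℕ} {s : Finset ι} {f : ι → Polynomial (Polynomial ℚ)}
    (h : ∀ i ∈ s, good k (f i)) : good k (∑ i ∈ s, f i) := by
  intro A B hAB
  rw [Polynomial.finset_sum_coeff, Polynomial.finset_sum_coeff] at hAB
  obtain ⟨i, hi, hne⟩ := Finset.exists_ne_zero_of_sum_ne_zero hAB
  exact h i hi A B hne

lemma good_add {k : ℕ} {p q : Polynomial (Polynomial ℚ)} (hp : good k p) (hq : good k q) :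
    good k (p + q) := by
  intro A B hAB
  rw [Polynomial.coeff_add, Polynomial.coeff_add] at hAB
  rcases eq_or_ne ((p.coeff A).coeff B) 0 with h0 | h0
  · exact hq A B (by rw [h0, zero_add] at hAB; exact hAB)
  · exact hp A B h0

lemma good_C_mul_X {k : ℕ} {e : Polynomial ℚ}
    (he : ∀ B, e.coeff B ≠ 0 → 1 ≤ B ∧ B ≤ k) :
    good k (Polynomial.C e * Polynomial.X) := by
  intro A B hAB
  rw [Polynomial.coeff_C_mul, Polynomial.coeff_X] at hAB
  by_cases hA : A = 1
  · subst hA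
    rw [if_pos rfl, mul_one] at hAB
    obtain ⟨h1, h2⟩ := he B hAB
    exact ⟨le_refl 1, h1, h2⟩
  · rw [if_neg (fun h => hA h.symm), mul_zero] at hAB
    simp at hAB

lemma good_C_mul_sig {c d : ℕ} {e : Polynomial ℚ} {q : Polynomial (Polynomial ℚ)}
    (he : ∀ B, e.coeff B ≠ 0 → 1 ≤ B ∧ B ≤ d)
    (hq : good c q) :
    good (d + c) (Polynomial.C e * sig q) := by
  intro A B hAB
  rw [Polynomial.coeff_C_mul, sig, Polynomial.finset_sum_coeff, Finset.mul_sum,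
    Polynomial.finset_sum_coeff] at hAB
  obtain ⟨A', _, hA'⟩ := Finset.exists_ne_zero_of_sum_ne_zero hAB
  rw [Polynomial.coeff_C_mul, Polynomial.coeff_map, ← mul_assoc,
    Polynomial.coeff_mul_C] at hA'
  have hs : (faul A').coeff A ≠ 0 := fun h => hA' (by rw [h, mul_zero])
  have hmul : (e * q.coeff A').coeff B ≠ 0 := fun h => hA' (by rw [h, zero_mul])
  have hA1 : 1 ≤ A := by
    rcases Nat.eq_zero_or_pos A with rfl | h
    · exact absurd (faul_coeff_zero A') hs
    · exact h
  have hA2 : A ≤ A' + 1 := by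
    by_contra hgt
    push_neg at hgt
    exact hs (Polynomial.coeff_eq_zero_of_natDegree_lt (lt_of_le_of_lt (faul_natDegree A') hgt))
  rw [Polynomial.coeff_mul] at hmul
  obtain ⟨bp, hbpmem, hbp⟩ := Finset.exists_ne_zero_of_sum_ne_zero hmul
  rw [Finset.HasAntidiagonal.mem_antidiagonal] at hbpmem
  have h1 : e.coeff bp.1 ≠ 0 := fun h => hbp (by rw [h, zero_mul])
  have h2 : (q.coeff A').coeff bp.2 ≠ 0 := fun h => hbp (by rw [h, mul_zero])
  obtain ⟨he1, he2⟩ := he bp.1 h1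
  obtain ⟨hq1, hq2, hq3⟩ := hq A' bp.2 h2
  omega

lemma xt_zero (t : ℕ) : xt (2 * t * 0) t = [] := by
  simp [xt]

lemma xt_succ (t M : ℕ) (ht : 0 < t) :
    xt (2 * t * (M + 1)) t = per t ++ xt (2 * t * M) t := by
  unfold xt
  rw [Nat.mul_div_cancel_left _ (by omega), Nat.mul_div_cancel_left _ (by omega),
    List.replicate_succ, List.flatten_cons]

lemma key_s15 : ∀ (n : ℕ) (w : List Bool), w.length ≤ n → w ≠ [] →
    ∃ p : Polynomial (Polynomial ℚ),
      good w.length p ∧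
      ∀ t M : ℕ, 0 < t → (dk (xt (2 * t * M) t) w : ℚ) = evh t M p := by
  intro n
  induction n with
  | zero =>
    intro w hw hne
    cases w with
    | nil => exact absurd rfl hne
    | cons b w' => simp at hw
  | succ n ih =>
    intro w hw hne
    have hwl : 1 ≤ w.length := List.length_pos_iff.mpr hne
    have Hq : ∀ j : ℕ, ∃ qj : Polynomial (Polynomial ℚ), (1 ≤ j ∧ j < w.length) →
        (good (w.drop j).length qj ∧
         ∀ t M : ℕ, 0 < t → (dk (xt (2 * t * M) t) (w.drop j) : ℚ) = evh t M qj) := by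
      intro j
      by_cases hj : 1 ≤ j ∧ j < w.length
      · obtain ⟨p, h1, h2⟩ := ih (w.drop j)
          (by rw [List.length_drop]; omega)
          (by
            intro h
            have := congrArg List.length h
            rw [List.length_drop] at this
            simp at this
            omega)
        exact ⟨p, fun _ => ⟨h1, h2⟩⟩
      · exact ⟨0, fun h => absurd h hj⟩
    choose q hq using Hq
    refine ⟨(∑ j ∈ Finset.Ico 1 w.length,
        Polynomial.C (epoly (w.take j)) * sig (q j))
      + Polynomial.C (epoly w) * Polynomial.X, ?_, ?_⟩
    · -- goodness
      apply good_add
      · apply good_sum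
        intro j hj
        rw [Finset.mem_Ico] at hj
        have htl : (w.take j).length = j := by
          rw [List.length_take]; omega
        have hdl : (w.drop j).length = w.length - j := by
          rw [List.length_drop]
        have hg := good_C_mul_sig
          (e := epoly (w.take j)) (q := q j)
          (d := j) (c := w.length - j)
          (by
            intro B hB
            have := epoly_coeff (w.take j)
              (by
                intro h
                rw [h] at htl
                simp at htl
                omega) B hB
            rw [htl] at this
            exact this)
          (by rw [← hdl] at *; exact ((hq j ⟨hj.1, hj.2⟩).1))
        have : j + (w.length - j) = w.length := by omega
        rw [this] at hg
        exact hg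
      · apply good_C_mul_X
        exact epoly_coeff w hne
    · -- evaluation
      set P := (∑ j ∈ Finset.Ico 1 w.length,
          Polynomial.C (epoly (w.take j)) * sig (q j))
        + Polynomial.C (epoly w) * Polynomial.X with hPdef
      intro t M ht
      induction M with
      | zero =>
        rw [xt_zero]
        rw [show dk [] w = 0 from by
          cases w with
          | nil => exact absurd rfl hne
          | cons b w' => rfl]
        rw [hPdef, map_add, map_sum]
        rw [Finset.sum_eq_zero, map_mul, evh_C_eval, evh_X]
        · simp
        · intro j hj
          rw [map_mul, evh_C_eval, sig_eval]
          simp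
      | succ M ihM =>
        rw [xt_succ t M ht, dk_append]
        push_cast
        rw [Finset.sum_range_succ' (fun j => (dk (per t) (w.take j) : ℚ)
          * (dk (xt (2 * t * M) t) (w.drop j) : ℚ)) w.length]
        have e0 : (dk (per t) (List.take 0 w) : ℚ)
            * (dk (xt (2 * t * M) t) (List.drop 0 w) : ℚ) = evh t M P := by
          rw [List.take_zero, List.drop_zero, dk_nil_right, ← ihM]
          simp
        have hstep : evh t (M + 1) P = evh t M P
            + ((∑ j ∈ Finset.Ico 1 w.length,
                (epoly (w.take j)).eval (t : ℚ) * evh t M (q j))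
              + (epoly w).eval (t : ℚ)) := by
          rw [hPdef]
          rw [map_add, map_add, map_sum, map_sum, map_mul, map_mul,
            evh_C_eval, evh_C_eval, evh_X, evh_X]
          simp_rw [map_mul, evh_C_eval, sig_eval, Finset.sum_range_succ, mul_add]
          rw [Finset.sum_add_distrib]
          push_cast
          ring
        have hsum : ∑ i ∈ Finset.range w.length,
            (dk (per t) (w.take (i + 1)) : ℚ) * (dk (xt (2 * t * M) t) (w.drop (i + 1)) : ℚ)
            = (∑ j ∈ Finset.Ico 1 w.length,
                (epoly (w.take j)).eval (t : ℚ) * evh t M (q j))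
              + (epoly w).eval (t : ℚ) := by
          have hre := Finset.sum_Ico_eq_sum_range
            (f := fun j => (dk (per t) (w.take j) : ℚ)
              * (dk (xt (2 * t * M) t) (w.drop j) : ℚ)) (m := 1) (n := w.length + 1)
          simp only [Nat.add_sub_cancel] at hre
          have hre2 : ∑ i ∈ Finset.range w.length,
              (dk (per t) (w.take (i + 1)) : ℚ)
                * (dk (xt (2 * t * M) t) (w.drop (i + 1)) : ℚ)
              = ∑ j ∈ Finset.Ico 1 (w.length + 1),
              (dk (per t) (w.take j) : ℚ) * (dk (xt (2 * t * M) t) (w.drop j) : ℚ) := by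
            rw [hre]
            refine Finset.sum_congr rfl ?_
            intro i _
            rw [Nat.add_comm 1 i]
          rw [hre2, Finset.sum_Ico_succ_top (by omega : 1 ≤ w.length)]
          congr 1
          · refine Finset.sum_congr rfl ?_
            intro j hj
            rw [Finset.mem_Ico] at hj
            rw [epoly_eval, ((hq j ⟨hj.1, hj.2⟩).2 t M ht)]
          · rw [List.take_length, List.drop_length, dk_nil_right, epoly_eval]
            simp
        rw [hsum, e0, hstep]
        ring

lemma evh_eq_sum' (q : Polynomial (Polynomial ℚ)) (t M k : ℕ) (h : q.natDegree ≤ k) :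
    evh t M q = ∑ A ∈ Finset.range (k + 1), (q.coeff A).eval (t : ℚ) * (M : ℚ) ^ A := by
  rw [evh_eq_sum]
  refine Finset.sum_subset (Finset.range_subset_range.mpr (by omega)) ?_
  intro A _ hnA
  rw [Finset.mem_range] at hnA
  rw [Polynomial.coeff_eq_zero_of_natDegree_lt (by omega)]
  simp

/-- For fixed `k ≥ 1` and pattern `y ∈ {0,1}^k`, the `k`-deck count
`K_k(x^(t))_y` equals `∑_{i=0}^{k-1} t^i f_{y,i}(l)` for polynomials `f_{y,i}`. -/
theorem stmt15 (k : ℕ) (hk : 1 ≤ k) (y : Fin k → Bool) :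
    ∃ f : Fin k → Polynomial ℚ, ∀ l t : ℕ, 0 < t → 2 * t ∣ l →
      (deck k (xt l t) y : ℚ) =
        ∑ i : Fin k, (t : ℚ) ^ (i : ℕ) * (f i).eval (l : ℚ) := by
  classical
  set w := List.ofFn y with hw
  have hwlen : w.length = k := by simp [hw]
  have hwne : w ≠ [] := by
    intro h
    rw [h] at hwlen
    simp at hwlen
    omega
  obtain ⟨p, hgood, heval⟩ := key_s15 w.length w le_rfl hwne
  rw [hwlen] at hgood
  refine ⟨fun i => ∑ A ∈ Finset.range (k + 1),
    Polynomial.C ((p.coeff A).coeff (A + (i : ℕ)) / 2 ^ A) * Polynomial.X ^ A, ?_⟩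
  intro l t ht hdvd
  set M := l / (2 * t) with hM
  have hl : 2 * t * M = l := Nat.mul_div_cancel' hdvd
  have hcast : (l : ℚ) = 2 * (t : ℚ) * (M : ℚ) := by
    rw [← hl]; push_cast; ring
  have hLHS : (dk (xt l t) w : ℚ) = evh t M p := by
    rw [show xt l t = xt (2 * t * M) t from by rw [hl]]
    exact heval t M ht
  rw [deck_eq_dk, ← hw, hLHS]
  -- degree bounds
  have hdegout : p.natDegree ≤ k := by
    rw [Polynomial.natDegree_le_iff_coeff_eq_zero]
    intro N hN
    ext B
    simp only [Polynomial.coeff_zero]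
    by_contra hne
    have := hgood N B hne
    omega
  have hdegin : ∀ A, (p.coeff A).natDegree ≤ k := by
    intro A
    rw [Polynomial.natDegree_le_iff_coeff_eq_zero]
    intro N hN
    by_contra hne
    have := hgood A N hne
    omega
  rw [evh_eq_sum' p t M k hdegout]
  have hin : ∀ A, (p.coeff A).eval (t : ℚ)
      = ∑ B ∈ Finset.range (k + 1), (p.coeff A).coeff B * (t : ℚ) ^ B := by
    intro A
    exact Polynomial.eval_eq_sum_range' (Nat.lt_succ_of_le (hdegin A)) _
  -- RHS simplification
  rw [Fin.sum_univ_eq_sum_range (fun i => (t : ℚ) ^ i *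
    Polynomial.eval (l : ℚ) (∑ A ∈ Finset.range (k + 1),
      Polynomial.C ((p.coeff A).coeff (A + i) / 2 ^ A) * Polynomial.X ^ A))]
  have hRHS : ∀ i ∈ Finset.range k, (t : ℚ) ^ i *
      Polynomial.eval (l : ℚ) (∑ A ∈ Finset.range (k + 1),
        Polynomial.C ((p.coeff A).coeff (A + i) / 2 ^ A) * Polynomial.X ^ A)
      = ∑ A ∈ Finset.range (k + 1), (p.coeff A).coeff (A + i) * (t : ℚ) ^ (A + i) * (M : ℚ) ^ A := by
    intro i _
    rw [Polynomial.eval_finset_sum, Finset.mul_sum]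
    refine Finset.sum_congr rfl ?_
    intro A _
    rw [Polynomial.eval_mul, Polynomial.eval_C, Polynomial.eval_pow, Polynomial.eval_X, hcast]
    rw [mul_pow, mul_pow, pow_add]
    field_simp
  rw [Finset.sum_congr rfl hRHS, Finset.sum_comm]
  refine Finset.sum_congr rfl ?_
  intro A hA
  rw [Finset.mem_range] at hA
  rw [hin A, Finset.sum_mul]
  rcases Nat.eq_zero_or_pos A with rfl | hApos
  · refine (Finset.sum_eq_zero ?_).trans (Finset.sum_eq_zero ?_).symm
    · intro B _
      have hz : (p.coeff 0).coeff B = 0 := by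
        by_contra hne
        have := hgood 0 B hne
        omega
      rw [hz]
      ring
    · intro i _
      have hz : (p.coeff 0).coeff (0 + i) = 0 := by
        by_contra hne
        have := hgood 0 (0 + i) hne
        omega
      rw [hz]
      ring
  · -- 1 ≤ A
    have hzero : ∀ B, (p.coeff A).coeff B ≠ 0 → A ≤ B ∧ B ≤ k := by
      intro B h
      have := hgood A B h
      omega
    -- LHS : sum over range (k+1); RHS : sum over i in range k of B = A + i
    have lhs_ext : ∑ B ∈ Finset.range (k + 1), (p.coeff A).coeff B * (t : ℚ) ^ B * (M : ℚ) ^ A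
        = ∑ B ∈ Finset.range (A + k), (p.coeff A).coeff B * (t : ℚ) ^ B * (M : ℚ) ^ A := by
      refine Finset.sum_subset (Finset.range_subset_range.mpr (by omega)) ?_
      intro B _ hB
      rw [Finset.mem_range] at hB
      have : (p.coeff A).coeff B = 0 := by
        by_contra hne
        have := hzero B hne
        omega
      rw [this]
      ring
    have rhs_re : ∑ i ∈ Finset.range k,
        (p.coeff A).coeff (A + i) * (t : ℚ) ^ (A + i) * (M : ℚ) ^ A
        = ∑ B ∈ Finset.Ico A (A + k), (p.coeff A).coeff B * (t : ℚ) ^ B * (M : ℚ) ^ A := by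
      rw [Finset.sum_Ico_eq_sum_range]
      simp only [Nat.add_sub_cancel_left]
    have rhs_ext : ∑ B ∈ Finset.Ico A (A + k), (p.coeff A).coeff B * (t : ℚ) ^ B * (M : ℚ) ^ A
        = ∑ B ∈ Finset.range (A + k), (p.coeff A).coeff B * (t : ℚ) ^ B * (M : ℚ) ^ A := by
      rw [Finset.range_eq_Ico]
      refine Finset.sum_subset (Finset.Ico_subset_Ico (by omega) le_rfl) ?_
      intro B hB hnB
      rw [Finset.mem_Ico] at hB hnB
      have : (p.coeff A).coeff B = 0 := by
        by_contra hne
        have := hzero B hne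
        omega
      rw [this]
      ring
    rw [lhs_ext, rhs_re, rhs_ext]
end

section
/- Let V be the k x k Vandermonde matrix with entries V_{i,j} = r_j^i for i,j in {0,...,k-1}, where r_0 < r_1 < ... < r_{k-1} are distinct reals. Then V is invertible and the entries of its inverse are given by V^{-1}_{i,j} = (-1)^j * e^{(i)}_{k-1-j} / prod_{s != i} (r_s - r_i), where e^{(i)}_d denotes the d-th elementary symmetric polynomial in the k-1 variables {r_s : s != i}. -/
open Polynomial Finset

/-- Explicit inverse of the Vandermonde matrix `V_{i,j} = r_j^i` with distinct
nodes `r_0 < r_1 < ⋯ < r_{k-1}`: `V` is invertible and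
`V⁻¹_{i,j} = (-1)^j e^{(i)}_{k-1-j} / ∏_{s ≠ i} (r_s - r_i)`, where `e^{(i)}_d`
is the `d`-th elementary symmetric polynomial in the variables `{r_s : s ≠ i}`. -/
theorem stmt16 (k : ℕ) (r : Fin k → ℝ) (hr : StrictMono r) :
    IsUnit (Matrix.of fun i j : Fin k => r j ^ (i : ℕ)) ∧
    ∀ i j : Fin k,
      (Matrix.of fun i j : Fin k => r j ^ (i : ℕ))⁻¹ i j =
        (-1) ^ (j : ℕ) * (((Finset.univ.erase i).val.map r).esymm (k - 1 - (j : ℕ))) /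
          ∏ s ∈ Finset.univ.erase i, (r s - r i) := by
  have hrinj : Function.Injective r := hr.injective
  set V : Matrix (Fin k) (Fin k) ℝ := Matrix.of fun i j : Fin k => r j ^ (i : ℕ) with hV
  set E : Fin k → ℕ → ℝ := fun i d => ((Finset.univ.erase i).val.map r).esymm d with hE
  set D : Fin k → ℝ := fun i => ∏ s ∈ Finset.univ.erase i, (r s - r i) with hD
  have hD0 : ∀ i, D i ≠ 0 := by
    intro i
    refine Finset.prod_ne_zero_iff.mpr fun s hs => ?_
    exact sub_ne_zero.mpr fun h => (Finset.mem_erase.mp hs).1 (hrinj h)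
  set W : Matrix (Fin k) (Fin k) ℝ :=
    Matrix.of (fun i m : Fin k => (-1) ^ (m : ℕ) * E i (k - 1 - (m : ℕ)) / D i) with hW
  have main : ∀ i j : Fin k,
      ∑ m : Fin k, (-1 : ℝ) ^ (m : ℕ) * E i (k - 1 - (m : ℕ)) * r j ^ (m : ℕ)
        = (-1) ^ (k - 1) * ∏ s ∈ Finset.univ.erase i, (r j - r s) := by
    intro i j
    have hk : 1 ≤ k := i.pos
    set M : Multiset ℝ := (Finset.univ.erase i).val.map r with hM
    have hcard : Multiset.card M = k - 1 := by
      simp [hM, Finset.card_erase_of_mem, Finset.mem_univ]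
    set P : ℝ[X] := (M.map fun a => X - C a).prod with hP
    have hdeg : P.natDegree = k - 1 := by
      rw [hP, natDegree_multiset_prod_X_sub_C_eq_card, hcard]
    have heval : P.eval (r j) = ∏ s ∈ Finset.univ.erase i, (r j - r s) := by
      rw [hP, eval_multiset_prod, Multiset.map_map, hM, Multiset.map_map,
        Finset.prod_eq_multiset_prod]
      simp
    have hcoeff : ∀ m : ℕ, m < k →
        P.coeff m = (-1) ^ (k - 1 - m) * E i (k - 1 - m) := by
      intro m hm
      rw [hP, Multiset.prod_X_sub_C_coeff M (by omega : m ≤ Multiset.card M), hcard]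
    have hsum : P.eval (r j) = ∑ m ∈ Finset.range k, P.coeff m * r j ^ m :=
      eval_eq_sum_range' (by omega) _
    rw [Fin.sum_univ_eq_sum_range
      (fun m => (-1 : ℝ) ^ m * E i (k - 1 - m) * r j ^ m), ← heval, hsum,
      Finset.mul_sum]
    refine Finset.sum_congr rfl fun m hm => ?_
    have hm' : m < k := Finset.mem_range.mp hm
    rw [hcoeff m hm']
    have : (-1 : ℝ) ^ m = (-1) ^ (k - 1) * (-1) ^ (k - 1 - m) := by
      rw [← pow_add]
      have h2 : (k - 1 + (k - 1 - m)) = m + 2 * (k - 1 - m) := by omega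
      rw [h2, pow_add, pow_mul]
      simp
    rw [this]; ring
  have key : W * V = 1 := by
    ext i j
    rw [Matrix.mul_apply]
    have : ∀ m : Fin k, W i m * V m j
        = (-1 : ℝ) ^ (m : ℕ) * E i (k - 1 - (m : ℕ)) * r j ^ (m : ℕ) / D i := by
      intro m
      simp only [hW, hV, Matrix.of_apply]
      ring
    rw [Finset.sum_congr rfl fun m _ => this m, ← Finset.sum_div, main i j]
    by_cases hij : j = i
    · subst hij
      have hcard : (Finset.univ.erase j).card = k - 1 := by
        simp [Finset.card_erase_of_mem, Finset.mem_univ]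
      have : (-1 : ℝ) ^ (k - 1) * ∏ s ∈ Finset.univ.erase j, (r j - r s) = D j := by
        have h2 : D j = ∏ s ∈ Finset.univ.erase j, (-1 : ℝ) * (r j - r s) :=
          Finset.prod_congr rfl fun s _ => by ring
        rw [h2, Finset.prod_mul_distrib, Finset.prod_const, hcard]
      rw [this, div_self (hD0 j), Matrix.one_apply_eq]
    · have : ∏ s ∈ Finset.univ.erase i, (r j - r s) = 0 :=
        Finset.prod_eq_zero (Finset.mem_erase.mpr ⟨hij, Finset.mem_univ j⟩) (by ring)
      rw [this, mul_zero, zero_div, Matrix.one_apply_ne (Ne.symm ?_)]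
      exact fun h => hij (by rw [h])
  have hinv : V⁻¹ = W := Matrix.inv_eq_left_inv key
  exact ⟨(Matrix.isUnit_iff_isUnit_det V).mpr (Matrix.isUnit_det_of_left_inverse key), fun i j => by rw [hinv]; rfl⟩
end

section
/- Let delta in (0,1/2] and consider the random variable L = |y| + sum_{i=1}^{|y|} (d_i - 1)/2 where |y| ~ Bin(n, 1-delta) and, conditioned on |y|, d_1,...,d_{|y|} are i.i.d. Geometric(1 - delta^2). Then E[L] = (1-delta) * n * (1 + delta^2 / (2(1 - delta^2))) = (1 - delta + delta^2/(2(1-delta^2)) - delta^3/(2(1-delta^2))) * n >= (1 - delta + delta^2/2 - delta^3/2 + delta^4/2 - delta^5/2) * n. -/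
open MeasureTheory

open scoped ENNReal

lemma aux_tsum_pi {k : ℕ} (f : Fin k → ℕ → ℝ≥0∞) :
    ∑' m : Fin k → ℕ, ∏ i, f i (m i) = ∏ i, ∑' t, f i t := by
  induction k with
  | zero =>
      rw [tsum_eq_single (fun i => i.elim0) (by
        intro b hb; exact absurd (Subsingleton.elim b _) hb)]
      simp
  | succ k ih =>
      rw [← (Fin.consEquiv (fun _ : Fin (k+1) => ℕ)).tsum_eq, ENNReal.tsum_prod']
      have h : ∀ (a : ℕ) (m : Fin k → ℕ),
          ∏ i, f i ((Fin.consEquiv fun _ => ℕ) (a, m) i)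
            = f 0 a * ∏ i : Fin k, f i.succ (m i) := by
        intro a m; rw [Fin.prod_univ_succ]; simp [Fin.consEquiv]
      simp_rw [h, ENNReal.tsum_mul_left, ih, ENNReal.tsum_mul_right, Fin.prod_univ_succ]

lemma aux_bernstein_sum (x : ℝ) (n : ℕ) :
    ∑ k ∈ Finset.range (n+1), (n.choose k : ℝ) * x^k * (1-x)^(n-k) = 1 := by
  have h := bernsteinPolynomial.sum ℝ n
  have := congrArg (Polynomial.eval x) h
  simpa [bernsteinPolynomial, Polynomial.eval_finset_sum] using this

lemma aux_bernstein_mean (x : ℝ) (n : ℕ) :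
    ∑ k ∈ Finset.range (n+1), (k : ℝ) * ((n.choose k : ℝ) * x^k * (1-x)^(n-k)) = n * x := by
  have h := bernsteinPolynomial.sum_smul ℝ n
  have := congrArg (Polynomial.eval x) h
  simpa [bernsteinPolynomial, Polynomial.eval_finset_sum, mul_assoc] using this

lemma aux_geo_one {q : ℝ} (h0 : 0 ≤ q) (h1 : q < 1) :
    ∑' m : ℕ, ENNReal.ofReal (q ^ m * (1 - q)) = 1 := by
  rw [← ENNReal.ofReal_tsum_of_nonneg
      (fun m => mul_nonneg (pow_nonneg h0 m) (by linarith))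
      ((summable_geometric_of_lt_one h0 h1).mul_right _), tsum_mul_right,
    tsum_geometric_of_lt_one h0 h1, inv_mul_cancel₀ (by linarith), ENNReal.ofReal_one]

lemma aux_geo_mean {q : ℝ} (h0 : 0 ≤ q) (h1 : q < 1) :
    ∑' m : ℕ, (m : ℝ≥0∞) * ENNReal.ofReal (q ^ m * (1 - q))
      = ENNReal.ofReal (q / (1 - q)) := by
  have hq : ‖q‖ < 1 := by rwa [Real.norm_eq_abs, abs_of_nonneg h0]
  have hsum : Summable (fun m : ℕ => (m : ℝ) * q ^ m) := by
    simpa using summable_pow_mul_geometric_of_norm_lt_one (R := ℝ) 1 hq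
  have h2 : ∀ m : ℕ, (m : ℝ≥0∞) * ENNReal.ofReal (q ^ m * (1 - q))
      = ENNReal.ofReal ((m : ℝ) * (q ^ m * (1 - q))) := fun m => by
    rw [ENNReal.ofReal_mul (Nat.cast_nonneg m), ENNReal.ofReal_natCast]
  simp_rw [h2]
  rw [← ENNReal.ofReal_tsum_of_nonneg
      (fun m => mul_nonneg (Nat.cast_nonneg m) (mul_nonneg (pow_nonneg h0 m) (by linarith)))
      (by simpa [mul_assoc] using hsum.mul_right (1 - q))]
  congr 1
  simp_rw [← mul_assoc]
  rw [tsum_mul_right, tsum_coe_mul_geometric_of_norm_lt_one hq]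
  have h3 : (1 : ℝ) - q ≠ 0 := by linarith
  field_simp
def auxA {Ω : Type} (N : Ω → ℕ) (d : ℕ → Ω → ℕ) (σ : Σ k : ℕ, Fin k → ℕ) : Set Ω :=
  {ω | N ω = σ.1} ∩ ⋂ i : Fin σ.1, {ω | d i ω = σ.2 i + 1}

lemma auxA_mem {Ω : Type} {N : Ω → ℕ} {d : ℕ → Ω → ℕ} {σ : Σ k : ℕ, Fin k → ℕ} {ω : Ω} :
    ω ∈ auxA N d σ ↔ N ω = σ.1 ∧ ∀ i : Fin σ.1, d i ω = σ.2 i + 1 := by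
  simp [auxA, Set.mem_iInter]

lemma auxA_meas {Ω : Type} [MeasurableSpace Ω] {N : Ω → ℕ} {d : ℕ → Ω → ℕ}
    (hN : Measurable N) (hd : ∀ i, Measurable (d i)) (σ : Σ k : ℕ, Fin k → ℕ) :
    MeasurableSet (auxA N d σ) := by
  refine (hN (measurableSet_singleton _)).inter (MeasurableSet.iInter fun i => ?_)
  exact hd i (measurableSet_singleton _)

lemma auxA_disj {Ω : Type} (N : Ω → ℕ) (d : ℕ → Ω → ℕ) :
    Pairwise (Function.onFun Disjoint (auxA N d)) := by
  rintro ⟨k, m⟩ ⟨k', m'⟩ hne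
  rw [Function.onFun, Set.disjoint_left]
  intro ω h1 h2
  obtain ⟨hk, hm⟩ := auxA_mem.mp h1
  obtain ⟨hk', hm'⟩ := auxA_mem.mp h2
  apply hne
  subst hk
  obtain rfl : k' = N ω := hk'.symm
  congr 1
  funext i
  exact Nat.succ_injective ((hm i).symm.trans (hm' i))

lemma aux_inner {q : ℝ} (h0 : 0 ≤ q) (h1 : q < 1) (k : ℕ) :
    ∑' m : Fin k → ℕ, ((k : ℝ≥0∞) + (∑ i, (m i : ℝ≥0∞)) / 2)
        * ∏ i, ENNReal.ofReal (q ^ m i * (1 - q))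
      = (k : ℝ≥0∞) * (1 + ENNReal.ofReal (q / (1 - q)) / 2) := by
  classical
  set W : ℕ → ℝ≥0∞ := fun t => ENNReal.ofReal (q ^ t * (1 - q)) with hW
  have hW1 : ∑' t, W t = 1 := aux_geo_one h0 h1
  have hWm : ∑' t : ℕ, (t : ℝ≥0∞) * W t = ENNReal.ofReal (q / (1 - q)) := aux_geo_mean h0 h1
  have hsplit : ∀ m : Fin k → ℕ,
      ((k : ℝ≥0∞) + (∑ i, (m i : ℝ≥0∞)) / 2) * ∏ i, W (m i)
        = (k : ℝ≥0∞) * ∏ i, W (m i) + ∑ i, ((m i : ℝ≥0∞) * ∏ j, W (m j)) / 2 := by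
    intro m
    rw [add_mul]
    congr 1
    simp only [div_eq_mul_inv, Finset.sum_mul]
    exact Finset.sum_congr rfl fun i _ => mul_right_comm _ _ _
  show ∑' m : Fin k → ℕ, ((k : ℝ≥0∞) + (∑ i, (m i : ℝ≥0∞)) / 2) * ∏ i, W (m i) = _
  simp_rw [hsplit]
  rw [ENNReal.tsum_add, ENNReal.tsum_mul_left,
    show (∑' m : Fin k → ℕ, ∏ i, W (m i)) = 1 by
      rw [aux_tsum_pi]; simp [hW1],
    Summable.tsum_finsetSum (fun i _ => ENNReal.summable)]
  have hterm : ∀ i : Fin k,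
      (∑' m : Fin k → ℕ, ((m i : ℝ≥0∞) * ∏ j, W (m j)) / 2)
        = ENNReal.ofReal (q / (1 - q)) / 2 := by
    intro i
    set F : Fin k → ℕ → ℝ≥0∞ := fun j t => if j = i then (t : ℝ≥0∞) * W t else W t with hF
    have hpt : ∀ m : Fin k → ℕ, (m i : ℝ≥0∞) * ∏ j, W (m j) = ∏ j, F j (m j) := by
      intro m
      rw [← Finset.mul_prod_erase Finset.univ (fun j => W (m j)) (Finset.mem_univ i),
        ← Finset.mul_prod_erase Finset.univ (fun j => F j (m j)) (Finset.mem_univ i),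
        ← mul_assoc]
      congr 1
      · simp [hF]
      · exact Finset.prod_congr rfl fun j hj => by
          simp [hF, Finset.ne_of_mem_erase hj]
    simp_rw [hpt]
    simp_rw [div_eq_mul_inv]
    rw [ENNReal.tsum_mul_right, aux_tsum_pi]
    congr 1
    rw [← Finset.mul_prod_erase Finset.univ (fun j => ∑' t, F j t) (Finset.mem_univ i)]
    have : ∀ j ∈ Finset.univ.erase i, (∑' t, F j t) = 1 := fun j hj => by
      simp only [hF, if_neg (Finset.ne_of_mem_erase hj)]; exact hW1
    rw [Finset.prod_congr rfl this, Finset.prod_const_one, mul_one]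
    simp only [hF, if_pos rfl]
    exact hWm
  rw [Finset.sum_congr rfl fun i _ => hterm i, Finset.sum_const, Finset.card_univ,
    Fintype.card_fin, nsmul_eq_mul]
  ring


/-- Let `L = N + ∑_{i<N} (dᵢ - 1)/2` where `N ~ Bin(n, 1-δ)` and, conditioned on
`N`, `d₁, …, d_N` are i.i.d. `Geometric(1-δ²)` (on `{1,2,…}`).  Then
`E[L] = (1-δ) n (1 + δ²/(2(1-δ²))) = (1 - δ + δ²/(2(1-δ²)) - δ³/(2(1-δ²))) n`
`     ≥ (1 - δ + δ²/2 - δ³/2 + δ⁴/2 - δ⁵/2) n`. -/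
theorem stmt18 (δ : ℝ) (hδ0 : 0 < δ) (hδ1 : δ ≤ 1 / 2) (n : ℕ)
    (Ω : Type) [MeasurableSpace Ω] (μ : Measure Ω) [IsProbabilityMeasure μ]
    (N : Ω → ℕ) (d : ℕ → Ω → ℕ) (hN : Measurable N) (hd : ∀ i, Measurable (d i))
    (hlaw : ∀ (k : ℕ) (j : ℕ → ℕ), (∀ i, i < k → 1 ≤ j i) →
      μ {ω | N ω = k ∧ ∀ i, i < k → d i ω = j i} =
        ENNReal.ofReal ((n.choose k : ℝ) * (1 - δ) ^ k * δ ^ (n - k) *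
          ∏ i ∈ Finset.range k, ((δ ^ 2) ^ (j i - 1) * (1 - δ ^ 2)))) :
    (∫ ω, ((N ω : ℝ) + ∑ i ∈ Finset.range (N ω), ((d i ω : ℝ) - 1) / 2) ∂μ)
        = (1 - δ) * n * (1 + δ ^ 2 / (2 * (1 - δ ^ 2))) ∧
    (1 - δ) * n * (1 + δ ^ 2 / (2 * (1 - δ ^ 2)))
        = (1 - δ + δ ^ 2 / (2 * (1 - δ ^ 2)) - δ ^ 3 / (2 * (1 - δ ^ 2))) * n ∧
    (1 - δ + δ ^ 2 / 2 - δ ^ 3 / 2 + δ ^ 4 / 2 - δ ^ 5 / 2) * n ≤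
      (∫ ω, ((N ω : ℝ) + ∑ i ∈ Finset.range (N ω), ((d i ω : ℝ) - 1) / 2) ∂μ) := by
  classical
  have hδ0' : 0 ≤ δ := hδ0.le
  have hδlt : δ < 1 := by linarith
  have hq0 : (0:ℝ) ≤ δ ^ 2 := sq_nonneg δ
  have hq1 : δ ^ 2 < 1 := by nlinarith
  have h1q : (0:ℝ) < 1 - δ ^ 2 := by linarith
  set q : ℝ := δ ^ 2 with hqdef
  set C : ℕ → ℝ := fun k => (n.choose k : ℝ) * (1 - δ) ^ k * δ ^ (n - k) with hCdef
  have hC0 : ∀ k, 0 ≤ C k := fun k =>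
    mul_nonneg (mul_nonneg (Nat.cast_nonneg _) (pow_nonneg (by linarith) _))
      (pow_nonneg hδ0' _)
  -- measure of the atoms
  have hμA : ∀ σ : Σ k : ℕ, Fin k → ℕ,
      μ (auxA N d σ) = ENNReal.ofReal (C σ.1 * ∏ i, q ^ (σ.2 i) * (1 - q)) := by
    rintro ⟨k, m⟩
    set j : ℕ → ℕ := fun i => if h : i < k then m ⟨i, h⟩ + 1 else 1 with hj
    have hj1 : ∀ i, i < k → 1 ≤ j i := fun i h => by simp [hj, h]
    have hset : {ω | N ω = k ∧ ∀ i, i < k → d i ω = j i} = auxA N d ⟨k, m⟩ := by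
      ext ω
      simp only [Set.mem_setOf_eq, auxA_mem]
      constructor
      · rintro ⟨h1, h2⟩
        refine ⟨h1, fun i => ?_⟩
        simpa [hj, i.2] using h2 i i.2
      · rintro ⟨h1, h2⟩
        refine ⟨h1, fun i hik => ?_⟩
        rw [hj]
        simp only [dif_pos hik]
        exact h2 ⟨i, hik⟩
    rw [← hset, hlaw k j hj1]
    congr 1
    have hprod : ∏ i ∈ Finset.range k, ((δ ^ 2) ^ (j i - 1) * (1 - δ ^ 2))
        = ∏ i : Fin k, q ^ (m i) * (1 - q) := by
      rw [← Fin.prod_univ_eq_prod_range (fun i => (δ ^ 2) ^ (j i - 1) * (1 - δ ^ 2)) k]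
      refine Finset.prod_congr rfl fun i _ => ?_
      rw [hj]
      simp only [dif_pos i.2, Fin.eta, Nat.add_sub_cancel]
      rfl
    rw [hprod, hCdef]
  -- total mass one
  have hBmass : ∑' σ : Σ k : ℕ, Fin k → ℕ, μ (auxA N d σ) = 1 := by
    simp_rw [hμA]
    rw [ENNReal.tsum_sigma']
    have hin : ∀ k : ℕ, (∑' m : Fin k → ℕ, ENNReal.ofReal (C k * ∏ i, q ^ m i * (1 - q)))
        = ENNReal.ofReal (C k) := by
      intro k
      have h1 : ∀ m : Fin k → ℕ, ENNReal.ofReal (C k * ∏ i, q ^ m i * (1 - q))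
          = ENNReal.ofReal (C k) * ∏ i, ENNReal.ofReal (q ^ m i * (1 - q)) := fun m => by
        rw [ENNReal.ofReal_mul (hC0 k),
          ENNReal.ofReal_prod_of_nonneg (fun i _ => mul_nonneg (pow_nonneg hq0 _) h1q.le)]
      simp_rw [h1]
      rw [ENNReal.tsum_mul_left, aux_tsum_pi (fun _ t => ENNReal.ofReal (q ^ t * (1 - q)))]
      simp [aux_geo_one hq0 hq1]
    simp_rw [hin]
    rw [tsum_eq_sum (s := Finset.range (n+1)) (fun k hk => by
      have hnk : n < k := by simpa using Finset.mem_range.not.mp hk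
      rw [hCdef]
      simp [Nat.choose_eq_zero_of_lt hnk])]
    rw [← ENNReal.ofReal_sum_of_nonneg (fun k _ => hC0 k)]
    have : ∑ k ∈ Finset.range (n+1), C k = 1 := by
      rw [← aux_bernstein_sum (1 - δ) n]
      refine Finset.sum_congr rfl fun k _ => ?_
      rw [hCdef]
      norm_num
    rw [this, ENNReal.ofReal_one]
  have hμBc : μ (⋃ σ, auxA N d σ)ᶜ = 0 := by
    rw [measure_compl (MeasurableSet.iUnion (auxA_meas hN hd)) (measure_ne_top μ _),
      measure_iUnion (auxA_disj N d) (auxA_meas hN hd), hBmass, measure_univ, tsub_self]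
  -- the integrand
  set g : Ω → ℝ := fun ω => (N ω : ℝ) + ∑ i ∈ Finset.range (N ω), ((d i ω : ℝ) - 1) / 2
    with hgdef
  have hg0 : ∀ ω, 0 ≤ g ω := by
    intro ω
    rw [hgdef]
    simp only
    rw [show ((N ω : ℝ)) = ∑ i ∈ Finset.range (N ω), (1:ℝ) by simp,
      ← Finset.sum_add_distrib]
    refine Finset.sum_nonneg fun i _ => ?_
    have : (0:ℝ) ≤ (d i ω : ℝ) := Nat.cast_nonneg _
    linarith
  set c : (Σ k : ℕ, Fin k → ℕ) → ℝ := fun σ => (σ.1 : ℝ) + (∑ i, (σ.2 i : ℝ)) / 2 with hcdef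
  have hgA : ∀ σ, ∀ ω ∈ auxA N d σ, g ω = c σ := by
    rintro ⟨k, m⟩ ω hω
    obtain ⟨h1, h2⟩ := auxA_mem.mp hω
    rw [hgdef, hcdef]
    simp only
    rw [h1]
    congr 1
    rw [← Fin.sum_univ_eq_sum_range (fun i => ((d i ω : ℝ) - 1) / 2) k, Finset.sum_div]
    refine Finset.sum_congr rfl fun i _ => ?_
    rw [h2 i]
    push_cast
    ring
  set G : Ω → ℝ≥0∞ :=
    fun ω => ∑' σ, (auxA N d σ).indicator (fun _ => ENNReal.ofReal (c σ)) ω with hGdef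
  have hGmeas : Measurable G :=
    Measurable.ennreal_tsum fun σ => measurable_const.indicator (auxA_meas hN hd σ)
  have hGA : ∀ σ, ∀ ω ∈ auxA N d σ, G ω = ENNReal.ofReal (c σ) := by
    intro σ ω hω
    rw [hGdef]
    simp only
    rw [tsum_eq_single σ (fun τ hτ =>
      Set.indicator_of_notMem
        (fun hmem => Set.disjoint_left.mp (auxA_disj N d hτ) hmem hω) _)]
    rw [Set.indicator_of_mem hω]
  have hae : (fun ω => ENNReal.ofReal (g ω)) =ᵐ[μ] G := by
    rw [Filter.EventuallyEq, ae_iff]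
    refine measure_mono_null (fun ω hω => ?_) hμBc
    simp only [Set.mem_setOf_eq] at hω
    rw [Set.mem_compl_iff]
    intro hmem
    obtain ⟨σ, hσ⟩ := Set.mem_iUnion.mp hmem
    exact hω (by rw [hgA σ ω hσ, hGA σ ω hσ])
  have haemg : AEMeasurable g μ := by
    have heq : g =ᵐ[μ] fun ω => (G ω).toReal := by
      refine hae.mono fun ω h => ?_
      show g ω = (G ω).toReal
      rw [← h, ENNReal.toReal_ofReal (hg0 ω)]
    exact (hGmeas.ennreal_toReal.aemeasurable).congr heq.symm
  have hlint : ∫⁻ ω, ENNReal.ofReal (g ω) ∂μ = ∑' σ, ENNReal.ofReal (c σ) * μ (auxA N d σ) := by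
    rw [lintegral_congr_ae hae, hGdef]
    simp only
    rw [lintegral_tsum (fun σ => (measurable_const.indicator (auxA_meas hN hd σ)).aemeasurable)]
    exact tsum_congr fun σ => lintegral_indicator_const (auxA_meas hN hd σ) _
  -- the key sum computation
  have hkey : ∑' σ, ENNReal.ofReal (c σ) * μ (auxA N d σ)
      = ENNReal.ofReal ((1 - δ) * n * (1 + q / (2 * (1 - q)))) := by
    rw [ENNReal.tsum_sigma']
    have hin : ∀ k : ℕ,
        (∑' m : Fin k → ℕ, ENNReal.ofReal (c ⟨k, m⟩) * μ (auxA N d ⟨k, m⟩))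
          = ENNReal.ofReal ((k : ℝ) * C k) * (1 + ENNReal.ofReal (q / (1 - q)) / 2) := by
      intro k
      have hterm : ∀ m : Fin k → ℕ,
          ENNReal.ofReal (c ⟨k, m⟩) * μ (auxA N d ⟨k, m⟩)
            = ENNReal.ofReal (C k) *
              (((k : ℝ≥0∞) + (∑ i, ((m i : ℕ) : ℝ≥0∞)) / 2)
                * ∏ i, ENNReal.ofReal (q ^ m i * (1 - q))) := by
        intro m
        rw [hμA ⟨k, m⟩]
        rw [hcdef]
        simp only
        rw [ENNReal.ofReal_mul (hC0 k),
          ENNReal.ofReal_prod_of_nonneg (fun i _ => mul_nonneg (pow_nonneg hq0 _) h1q.le),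
          ENNReal.ofReal_add (Nat.cast_nonneg _)
            (div_nonneg (Finset.sum_nonneg fun i _ => Nat.cast_nonneg _) two_pos.le),
          ENNReal.ofReal_natCast, ENNReal.ofReal_div_of_pos two_pos,
          ENNReal.ofReal_sum_of_nonneg (fun i _ => Nat.cast_nonneg _), ENNReal.ofReal_ofNat]
        simp_rw [ENNReal.ofReal_natCast]
        ring
      simp_rw [hterm]
      rw [ENNReal.tsum_mul_left, aux_inner hq0 hq1 k,
        ENNReal.ofReal_mul (Nat.cast_nonneg k), ENNReal.ofReal_natCast]
      ring
    simp_rw [hin]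
    rw [ENNReal.tsum_mul_right]
    have hmean : ∑' k : ℕ, ENNReal.ofReal ((k : ℝ) * C k) = ENNReal.ofReal ((1 - δ) * n) := by
      rw [tsum_eq_sum (s := Finset.range (n+1)) (fun k hk => by
        have hnk : n < k := by simpa using Finset.mem_range.not.mp hk
        rw [hCdef]
        simp [Nat.choose_eq_zero_of_lt hnk])]
      rw [← ENNReal.ofReal_sum_of_nonneg
        (fun k _ => mul_nonneg (Nat.cast_nonneg k) (hC0 k))]
      congr 1
      have := aux_bernstein_mean (1 - δ) n
      rw [show ((1:ℝ) - δ) * n = (n : ℝ) * (1 - δ) from mul_comm _ _, ← this]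
      refine Finset.sum_congr rfl fun k _ => ?_
      rw [hCdef]
      norm_num
    rw [hmean]
    have hfac : (1 : ℝ≥0∞) + ENNReal.ofReal (q / (1 - q)) / 2
        = ENNReal.ofReal (1 + q / (2 * (1 - q))) := by
      rw [ENNReal.ofReal_add one_pos.le (div_nonneg hq0 (by linarith)), ENNReal.ofReal_one]
      congr 1
      rw [show q / (2 * (1 - q)) = (q / (1 - q)) / 2 from by rw [div_div, mul_comm],
        ENNReal.ofReal_div_of_pos two_pos, ENNReal.ofReal_ofNat]
    rw [hfac, ← ENNReal.ofReal_mul (mul_nonneg (by linarith) (Nat.cast_nonneg n))]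
  have hans0 : (0:ℝ) ≤ (1 - δ) * n * (1 + q / (2 * (1 - q))) := by
    have : (0:ℝ) ≤ q / (2 * (1 - q)) := div_nonneg hq0 (by linarith)
    have h2 : (0:ℝ) ≤ (1 - δ) * n := mul_nonneg (by linarith) (Nat.cast_nonneg n)
    nlinarith
  have hintg : ∫ ω, g ω ∂μ = (1 - δ) * n * (1 + q / (2 * (1 - q))) := by
    rw [integral_eq_lintegral_of_nonneg_ae (Filter.Eventually.of_forall hg0) haemg.aestronglyMeasurable, hlint,
      hkey, ENNReal.toReal_ofReal hans0]
  refine ⟨hintg, ?_, ?_⟩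
  · have hne : (1:ℝ) - q ≠ 0 := by linarith
    field_simp
    ring
  · rw [hintg]
    have key2 : (1 - δ + δ ^ 2 / 2 - δ ^ 3 / 2 + δ ^ 4 / 2 - δ ^ 5 / 2 : ℝ)
        ≤ (1 - δ) * (1 + q / (2 * (1 - q))) := by
      rw [show ((1:ℝ) - δ) * (1 + q / (2 * (1 - q)))
          = 1 - δ + ((1 - δ) * q) / (2 * (1 - q)) from by ring]
      have h2 : (0:ℝ) < 2 * (1 - q) := by linarith
      have h3 : (δ ^ 2 / 2 - δ ^ 3 / 2 + δ ^ 4 / 2 - δ ^ 5 / 2 : ℝ)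
          ≤ ((1 - δ) * q) / (2 * (1 - q)) := by
        rw [le_div_iff₀ h2, hqdef]
        nlinarith [pow_nonneg hδ0' 6, pow_nonneg hδ0' 7]
      linarith
    calc (1 - δ + δ ^ 2 / 2 - δ ^ 3 / 2 + δ ^ 4 / 2 - δ ^ 5 / 2 : ℝ) * n
        ≤ ((1 - δ) * (1 + q / (2 * (1 - q)))) * n := by
          refine mul_le_mul_of_nonneg_right key2 (Nat.cast_nonneg n)
      _ = (1 - δ) * n * (1 + q / (2 * (1 - q))) := by ring
end
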